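/- arXiv:2303.08412 — 4 statements merged into one kernel-verified Lean document; each statement's English description precedes it below -/
import Mathlib

section
/- Suppose each f_i : ℝ^d → ℝ (i = 1,…,n) is L-smooth, i.e. ‖∇f_i(x) − ∇f_i(y)‖ ≤ L‖x−y‖ for all x, y. Let x_1, …, x_n ∈ ℝ^d, x̄ = (1/n)Σ_k x_k, let x_* ∈ ℝ^d, and set D = max_i ‖∇f_i(x_*)‖. Then Σ_{i=1}^n ‖∇f_i(x_i) − (1/n) Σ_{l=1}^n ∇f_l(x_l)‖² ≤ 3L² Σ_{i=1}^n ‖x_i − x̄‖² + 3nL² ‖x̄ − x_*‖² + 3nD². -/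
open Finset

lemma var_bound {E : Type*} [NormedAddCommGroup E] [InnerProductSpace ℝ E]
    {n : ℕ} (a : Fin n → E) :
    ∑ i, ‖a i - (n : ℝ)⁻¹ • ∑ l, a l‖ ^ 2 ≤ ∑ i, ‖a i‖ ^ 2 := by
  rcases Nat.eq_zero_or_pos n with h | h
  · subst h; simp
  set s := ∑ l, a l with hs
  set m : E := (n : ℝ)⁻¹ • s with hm
  have hexp : ∀ i : Fin n, ‖a i - m‖ ^ 2 = ‖a i‖ ^ 2 - 2 * inner ℝ (a i) m + ‖m‖ ^ 2 := by
    intro i; exact norm_sub_sq_real (a i) m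
  have hsum : ∑ i, ‖a i - m‖ ^ 2
      = ∑ i, ‖a i‖ ^ 2 - 2 * inner ℝ s m + (n : ℝ) * ‖m‖ ^ 2 := by
    simp only [hexp]
    rw [Finset.sum_add_distrib, Finset.sum_sub_distrib, ← Finset.mul_sum,
      ← sum_inner, Finset.sum_const, card_univ, Fintype.card_fin, nsmul_eq_mul]
  have hnpos : (0 : ℝ) < n := by exact_mod_cast h
  have h1 : (inner ℝ s m : ℝ) = (n : ℝ)⁻¹ * ‖s‖ ^ 2 := by
    rw [hm, real_inner_smul_right, real_inner_self_eq_norm_sq]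
  have h2 : ‖m‖ ^ 2 = (n : ℝ)⁻¹ ^ 2 * ‖s‖ ^ 2 := by
    rw [hm, norm_smul]
    simp [mul_pow, abs_of_nonneg (le_of_lt (inv_pos.2 hnpos))]
  rw [hsum, h1, h2]
  have hinv : (n : ℝ) * (n : ℝ)⁻¹ = 1 := mul_inv_cancel₀ (ne_of_gt hnpos)
  have hinvnn : (0 : ℝ) ≤ (n : ℝ)⁻¹ := le_of_lt (inv_pos.2 hnpos)
  nlinarith [sq_nonneg ‖s‖, mul_nonneg hinvnn (sq_nonneg ‖s‖)]

lemma tri_sq {E : Type*} [NormedAddCommGroup E] (u v w : E) :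
    ‖u‖ ^ 2 ≤ 3 * ‖u - v‖ ^ 2 + 3 * ‖v - w‖ ^ 2 + 3 * ‖w‖ ^ 2 := by
  have h : ‖u‖ ≤ ‖u - v‖ + ‖v - w‖ + ‖w‖ := by
    calc ‖u‖ = ‖(u - v) + (v - w) + w‖ := by rw [sub_add_sub_cancel, sub_add_cancel]
    _ ≤ ‖u - v‖ + ‖v - w‖ + ‖w‖ := norm_add₃_le
  nlinarith [norm_nonneg u, norm_nonneg (u - v), norm_nonneg (v - w), norm_nonneg w,
    sq_nonneg (‖u - v‖ - ‖v - w‖), sq_nonneg (‖u - v‖ - ‖w‖), sq_nonneg (‖v - w‖ - ‖w‖)]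

/-- Bound on the deviation of local gradients from their mean for `L`-smooth costs. -/
theorem grad_deviation_bound {d n : ℕ} (f : Fin n → EuclideanSpace ℝ (Fin d) → ℝ)
    (g : Fin n → EuclideanSpace ℝ (Fin d) → EuclideanSpace ℝ (Fin d))
    (L : ℝ) (hL : 0 ≤ L)
    (hsmooth : ∀ i x y, ‖g i x - g i y‖ ≤ L * ‖x - y‖)
    (x : Fin n → EuclideanSpace ℝ (Fin d)) (xstar : EuclideanSpace ℝ (Fin d))
    (D : ℝ) (hD : ∀ i, ‖g i xstar‖ ≤ D) :
    ∑ i, ‖g i (x i) - (n : ℝ)⁻¹ • ∑ l, g l (x l)‖ ^ 2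
      ≤ 3 * L ^ 2 * ∑ i, ‖x i - (n : ℝ)⁻¹ • ∑ k, x k‖ ^ 2
        + 3 * n * L ^ 2 * ‖(n : ℝ)⁻¹ • (∑ k, x k) - xstar‖ ^ 2
        + 3 * n * D ^ 2 := by
  set xbar : EuclideanSpace ℝ (Fin d) := (n : ℝ)⁻¹ • ∑ k, x k with hxbar
  have step1 : ∑ i, ‖g i (x i) - (n : ℝ)⁻¹ • ∑ l, g l (x l)‖ ^ 2
      ≤ ∑ i, ‖g i (x i)‖ ^ 2 := var_bound (fun i => g i (x i))
  have step2 : ∀ i : Fin n, ‖g i (x i)‖ ^ 2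
      ≤ 3 * L ^ 2 * ‖x i - xbar‖ ^ 2 + 3 * L ^ 2 * ‖xbar - xstar‖ ^ 2 + 3 * D ^ 2 := by
    intro i
    have h1 : ‖g i (x i) - g i xbar‖ ^ 2 ≤ L ^ 2 * ‖x i - xbar‖ ^ 2 := by
      have := hsmooth i (x i) xbar
      nlinarith [norm_nonneg (g i (x i) - g i xbar), norm_nonneg (x i - xbar)]
    have h2 : ‖g i xbar - g i xstar‖ ^ 2 ≤ L ^ 2 * ‖xbar - xstar‖ ^ 2 := by
      have := hsmooth i xbar xstar
      nlinarith [norm_nonneg (g i xbar - g i xstar), norm_nonneg (xbar - xstar)]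
    have h3 : ‖g i xstar‖ ^ 2 ≤ D ^ 2 := by
      have := hD i
      nlinarith [norm_nonneg (g i xstar)]
    have := tri_sq (g i (x i)) (g i xbar) (g i xstar)
    linarith
  calc ∑ i, ‖g i (x i) - (n : ℝ)⁻¹ • ∑ l, g l (x l)‖ ^ 2
      ≤ ∑ i, ‖g i (x i)‖ ^ 2 := step1
    _ ≤ ∑ i : Fin n, (3 * L ^ 2 * ‖x i - xbar‖ ^ 2 + 3 * L ^ 2 * ‖xbar - xstar‖ ^ 2
          + 3 * D ^ 2) := Finset.sum_le_sum fun i _ => step2 i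
    _ = 3 * L ^ 2 * ∑ i, ‖x i - xbar‖ ^ 2 + 3 * n * L ^ 2 * ‖xbar - xstar‖ ^ 2
          + 3 * n * D ^ 2 := by
        rw [Finset.sum_add_distrib, Finset.sum_add_distrib, ← Finset.mul_sum,
          Finset.sum_const, Finset.sum_const, card_univ, Fintype.card_fin,
          nsmul_eq_mul, nsmul_eq_mul]
        ring
end

section
/- Let 0 < β < 1, G > 0, μ > 0, α > 0 with μα/2 < 1, and let q : ℕ → ℝ satisfy q(0) = 0 and q(t+1) = (1 − μα/2) q(t) + G β^t for all t. Then for all t ≥ 1, q(t) ≤ (2G/(μα)) ((1 − μα/2)^{t−1} + β^{(t−1)/2}). -/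
open Finset

private lemma geom_aux {c : ℝ} (hc0 : 0 < c) (N : ℕ) :
    (1 - c) * ∑ k ∈ range N, c ^ k ≤ 1 := by
  have h := geom_sum_mul c N
  nlinarith [pow_nonneg hc0.le N]

private lemma convexOn_finset_sum {ι : Type*} (s : Finset ι) (f : ι → ℝ → ℝ)
    (h : ∀ i ∈ s, ConvexOn ℝ (Set.Ioi (0:ℝ)) (f i)) :
    ConvexOn ℝ (Set.Ioi (0:ℝ)) (fun y => ∑ i ∈ s, f i y) := by
  classical
  induction s using Finset.induction with
  | empty => simpa using convexOn_const (0:ℝ) (convex_Ioi (0:ℝ))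
  | @insert a s ha ih =>
    have h1 : ConvexOn ℝ (Set.Ioi (0:ℝ)) (f a) := h a (mem_insert_self a s)
    have h2 : ConvexOn ℝ (Set.Ioi (0:ℝ)) (fun y => ∑ i ∈ s, f i y) :=
      ih (fun i hi => h i (mem_insert_of_mem hi))
    have := h1.add h2
    simpa [Finset.sum_insert ha, Pi.add_def] using this

private lemma key_lemma {β c : ℝ} (hβ0 : 0 < β) (hβ1 : β < 1) (hc0 : 0 < c) (hc1 : c < 1)
    (n : ℕ) :
    (1 - c) * ∑ s ∈ range (n + 1), β ^ s * c ^ (n - s) ≤ c ^ n + Real.sqrt β ^ n := by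
  have hx0 : 0 < Real.sqrt β := Real.sqrt_pos.2 hβ0
  have hxsq : Real.sqrt β ^ 2 = β := Real.sq_sqrt hβ0.le
  have hx1 : Real.sqrt β < 1 := by nlinarith [hx0.le]
  set x : ℝ := Real.sqrt β with hxdef
  have hxn : (0:ℝ) ≤ x ^ n := by positivity
  rcases le_total x c with hxc | hcx
  · -- easy case : β ≤ c², sum is bounded by c^n/(1-c)
    have hterm : ∀ s ∈ range (n+1), β ^ s * c ^ (n - s) ≤ c ^ n * c ^ s := by
      intro s hs
      have hs' : s ≤ n := Nat.lt_succ_iff.mp (mem_range.mp hs)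
      have h1 : β ^ s ≤ (c ^ 2) ^ s := by
        apply pow_le_pow_left₀ hβ0.le (by nlinarith) s
      calc β ^ s * c ^ (n - s) ≤ (c ^ 2) ^ s * c ^ (n - s) :=
            mul_le_mul_of_nonneg_right h1 (by positivity)
        _ = c ^ n * c ^ s := by
            rw [← pow_mul, ← pow_add, ← pow_add]; congr 1; omega
    have hsum : ∑ s ∈ range (n+1), β ^ s * c ^ (n - s)
        ≤ c ^ n * ∑ s ∈ range (n+1), c ^ s := by
      rw [Finset.mul_sum]; exact Finset.sum_le_sum hterm
    have hgeom := geom_aux hc0 (n+1)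
    have hcn : (0:ℝ) ≤ c ^ n := by positivity
    calc (1 - c) * ∑ s ∈ range (n+1), β ^ s * c ^ (n - s)
        ≤ (1 - c) * (c ^ n * ∑ s ∈ range (n+1), c ^ s) :=
          mul_le_mul_of_nonneg_left hsum (by linarith)
      _ = c ^ n * ((1 - c) * ∑ s ∈ range (n+1), c ^ s) := by ring
      _ ≤ c ^ n * 1 := mul_le_mul_of_nonneg_left hgeom hcn
      _ ≤ c ^ n + x ^ n := by nlinarith
  · -- hard case : c ≤ √β, use convexity
    set F : ℝ → ℝ := fun y => ∑ s ∈ range (n+1), c ^ (n - s) * y ^ (2*(s:ℤ) - n) with hF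
    have hFconv : ConvexOn ℝ (Set.Ioi (0:ℝ)) F := by
      apply convexOn_finset_sum
      intro s _
      have := (convexOn_zpow (2*(s:ℤ) - n)).smul (c := c ^ (n - s)) (by positivity)
      simpa [smul_eq_mul] using this
    have hxseg : x ∈ segment ℝ c (1:ℝ) := by
      rw [segment_eq_Icc (by linarith : c ≤ 1)]
      exact ⟨hcx, hx1.le⟩
    have hmax := hFconv.le_on_segment (Set.mem_Ioi.2 hc0) (Set.mem_Ioi.2 one_pos) hxseg
    -- F c = ∑ c^s
    have hFc : F c = ∑ s ∈ range (n+1), c ^ s := by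
      apply Finset.sum_congr rfl
      intro s hs
      have hs' : s ≤ n := Nat.lt_succ_iff.mp (mem_range.mp hs)
      rw [← zpow_natCast c (n - s), ← zpow_add₀ hc0.ne']
      rw [← zpow_natCast c s]
      congr 1
      omega
    have hF1 : F (1:ℝ) = ∑ s ∈ range (n+1), c ^ s := by
      have : F (1:ℝ) = ∑ s ∈ range (n+1), c ^ (n - s) := by
        apply Finset.sum_congr rfl
        intro s _
        simp
      rw [this]
      have := Finset.sum_range_reflect (fun k => c ^ k) (n+1)
      simpa using this
    have hFx : ∑ s ∈ range (n+1), β ^ s * c ^ (n - s) = x ^ n * F x := by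
      rw [hF, Finset.mul_sum]
      apply Finset.sum_congr rfl
      intro s _
      have : x ^ n * (c ^ (n - s) * x ^ (2*(s:ℤ) - n)) = c ^ (n - s) * (x ^ n * x ^ (2*(s:ℤ) - n)) := by
        ring
      rw [this, ← zpow_natCast x n, ← zpow_add₀ hx0.ne']
      have h2 : (n:ℤ) + (2*(s:ℤ) - n) = ((2*s : ℕ) : ℤ) := by push_cast; ring
      rw [h2, zpow_natCast, pow_mul, hxsq]
      ring
    have hgeom := geom_aux hc0 (n+1)
    have hFxle : F x ≤ ∑ s ∈ range (n+1), c ^ s := by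
      rcases max_cases (F c) (F 1) with ⟨hm, _⟩ | ⟨hm, _⟩
      · rw [hm, hFc] at hmax; exact hmax
      · rw [hm, hF1] at hmax; exact hmax
    calc (1 - c) * ∑ s ∈ range (n+1), β ^ s * c ^ (n - s)
        = x ^ n * ((1 - c) * F x) := by rw [hFx]; ring
      _ ≤ x ^ n * ((1 - c) * ∑ s ∈ range (n+1), c ^ s) := by
          apply mul_le_mul_of_nonneg_left _ hxn
          exact mul_le_mul_of_nonneg_left hFxle (by linarith)
      _ ≤ x ^ n * 1 := mul_le_mul_of_nonneg_left hgeom hxn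
      _ ≤ c ^ n + x ^ n := by nlinarith [pow_pos hc0 n]

/-- Bound for the auxiliary sequence `q(t+1) = (1 − μα/2) q(t) + G β^t`, `q(0) = 0`. -/
theorem aux_seq_bound (β G μ α : ℝ) (hβ0 : 0 < β) (hβ1 : β < 1)
    (hG : 0 < G) (hμ : 0 < μ) (hα : 0 < α) (hμα : μ * α / 2 < 1)
    (q : ℕ → ℝ) (hq0 : q 0 = 0)
    (hrec : ∀ t : ℕ, q (t + 1) = (1 - μ * α / 2) * q t + G * β ^ t) :
    ∀ t : ℕ, 1 ≤ t →
      q t ≤ 2 * G / (μ * α) * ((1 - μ * α / 2) ^ (t - 1) + β ^ (((t : ℝ) - 1) / 2)) := by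
  intro t ht
  have hμα0 : 0 < μ * α := mul_pos hμ hα
  set c : ℝ := 1 - μ * α / 2 with hcdef
  have hc0 : 0 < c := by rw [hcdef]; linarith
  have hc1 : c < 1 := by rw [hcdef]; linarith
  obtain ⟨n, rfl⟩ : ∃ n, t = n + 1 := ⟨t - 1, by omega⟩
  -- q is bounded by G times the convolution sum
  have hq : ∀ m : ℕ, q (m + 1) ≤ G * ∑ s ∈ range (m + 1), β ^ s * c ^ (m - s) := by
    intro m
    induction m with
    | zero => simp [hrec 0, hq0]
    | succ m ih =>
      have hsum : ∑ s ∈ range (m + 2), β ^ s * c ^ (m + 1 - s)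
          = c * ∑ s ∈ range (m + 1), β ^ s * c ^ (m - s) + β ^ (m + 1) := by
        rw [Finset.sum_range_succ]
        have hcongr : ∀ s ∈ range (m + 1), β ^ s * c ^ (m + 1 - s)
            = c * (β ^ s * c ^ (m - s)) := by
          intro s hs
          have hs' : s ≤ m := Nat.lt_succ_iff.mp (mem_range.mp hs)
          have h1 : m + 1 - s = (m - s) + 1 := by omega
          rw [h1, pow_succ]; ring
        rw [Finset.sum_congr rfl hcongr, ← Finset.mul_sum]
        simp
      rw [hrec (m + 1), hsum]
      have := mul_le_mul_of_nonneg_left ih hc0.le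
      nlinarith
  have hkey := key_lemma hβ0 hβ1 hc0 hc1 n
  have hS0 : (0:ℝ) ≤ ∑ s ∈ range (n + 1), β ^ s * c ^ (n - s) := by
    apply Finset.sum_nonneg
    intro s _
    positivity
  -- rewrite the rpow
  have hrpow : β ^ (((↑(n + 1) : ℝ) - 1) / 2) = Real.sqrt β ^ n := by
    have h1 : ((↑(n + 1) : ℝ) - 1) / 2 = (1/2 : ℝ) * (n : ℝ) := by push_cast; ring
    rw [h1, Real.rpow_mul hβ0.le, Real.rpow_natCast]
    congr 1
    rw [Real.sqrt_eq_rpow]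
  have htsub : (n + 1) - 1 = n := by omega
  rw [htsub, hrpow]
  have h2G : 2 * G / (μ * α) * (c ^ n + Real.sqrt β ^ n)
      = G * ((c ^ n + Real.sqrt β ^ n) / (1 - c)) := by
    rw [hcdef]
    have : (1 : ℝ) - (1 - μ * α / 2) = μ * α / 2 := by ring
    rw [this]
    field_simp
  rw [h2G]
  calc q (n + 1) ≤ G * ∑ s ∈ range (n + 1), β ^ s * c ^ (n - s) := hq n
    _ ≤ G * ((c ^ n + Real.sqrt β ^ n) / (1 - c)) := by
        apply mul_le_mul_of_nonneg_left _ hG.le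
        rw [le_div_iff₀ (by linarith : (0:ℝ) < 1 - c)]
        linarith [hkey]
end

section
/- Let 0 < α < 1/45 and consider the map on ℝ² given by x₁' = max((2/3 − 10α)x₁ + (1/3)x₂, 1), x₂' = max((1/3)x₁ + (2/3 + 6α)x₂, 1). Suppose x₁(t₀+1) = 1 and 1 ≤ x₂(t₀+1) ≤ 1 + 30α. Then for all t ≥ t₀ + 1, the iterates satisfy x₁(t) = 1 and 1 ≤ x₂(t) ≤ 1 + 30α, and x₂(t) → 1/(1 − 18α) as t → ∞; moreover x₂(t+1) − 1/(1−18α) = ((2+18α)/3)(x₂(t) − 1/(1−18α)) whenever x₁(t) = 1 and x₂(t) ≥ 1. -/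
/-- Convergence of the one-dimensional projected decentralized gradient descent example:
once `x₁` is trapped at `1` with `x₂` in `[1, 1 + 30α]`, it stays there, `x₂` converges to
`1/(1 − 18α)`, and the exact linear recursion holds for `x₂`. -/
theorem one_dim_example (α : ℝ) (hα0 : 0 < α) (hα1 : α < 1 / 45)
    (x₁ x₂ : ℕ → ℝ)
    (hrec1 : ∀ t, x₁ (t + 1) = max ((2 / 3 - 10 * α) * x₁ t + (1 / 3) * x₂ t) 1)
    (hrec2 : ∀ t, x₂ (t + 1) = max ((1 / 3) * x₁ t + (2 / 3 + 6 * α) * x₂ t) 1)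
    (t₀ : ℕ) (h1 : x₁ (t₀ + 1) = 1) (h2l : 1 ≤ x₂ (t₀ + 1)) (h2u : x₂ (t₀ + 1) ≤ 1 + 30 * α) :
    (∀ t, t₀ + 1 ≤ t → x₁ t = 1 ∧ 1 ≤ x₂ t ∧ x₂ t ≤ 1 + 30 * α) ∧
    Filter.Tendsto x₂ Filter.atTop (nhds (1 / (1 - 18 * α))) ∧
    (∀ t, x₁ t = 1 → 1 ≤ x₂ t →
      x₂ (t + 1) - 1 / (1 - 18 * α) = (2 + 18 * α) / 3 * (x₂ t - 1 / (1 - 18 * α))) := by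
  have h18 : (0:ℝ) < 1 - 18 * α := by nlinarith
  have hr0 : (0:ℝ) ≤ (2 + 18 * α) / 3 := by nlinarith
  have hr1 : (2 + 18 * α) / 3 < 1 := by nlinarith
  have part3 : ∀ t, x₁ t = 1 → 1 ≤ x₂ t →
      x₂ (t + 1) - 1 / (1 - 18 * α) = (2 + 18 * α) / 3 * (x₂ t - 1 / (1 - 18 * α)) := by
    intro t h1t h2t
    have hx : x₂ (t + 1) = (1 / 3) * 1 + (2 / 3 + 6 * α) * x₂ t := by
      rw [hrec2, h1t]; exact max_eq_left (by nlinarith)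
    rw [hx]
    linear_combination (-1/3 : ℝ) * mul_one_div_cancel h18.ne'
  have step : ∀ t, x₁ t = 1 → 1 ≤ x₂ t → x₂ t ≤ 1 + 30 * α →
      x₁ (t + 1) = 1 ∧ 1 ≤ x₂ (t + 1) ∧ x₂ (t + 1) ≤ 1 + 30 * α := by
    intro t h1t hl hu
    have hx1 : x₁ (t + 1) = 1 := by
      rw [hrec1, h1t]; exact max_eq_right (by nlinarith)
    have hx : x₂ (t + 1) = (1 / 3) * 1 + (2 / 3 + 6 * α) * x₂ t := by
      rw [hrec2, h1t]; exact max_eq_left (by nlinarith)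
    exact ⟨hx1, by rw [hx]; nlinarith, by rw [hx]; nlinarith⟩
  have inv : ∀ n : ℕ, x₁ (t₀ + 1 + n) = 1 ∧ 1 ≤ x₂ (t₀ + 1 + n) ∧
      x₂ (t₀ + 1 + n) ≤ 1 + 30 * α := by
    intro n
    induction n with
    | zero => exact ⟨h1, h2l, h2u⟩
    | succ n ih =>
      have := step (t₀ + 1 + n) ih.1 ih.2.1 ih.2.2
      exact this
  have geo : ∀ n : ℕ, x₂ (t₀ + 1 + n) - 1 / (1 - 18 * α) =
      ((2 + 18 * α) / 3) ^ n * (x₂ (t₀ + 1) - 1 / (1 - 18 * α)) := by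
    intro n
    induction n with
    | zero => simp
    | succ n ih =>
      have h := part3 (t₀ + 1 + n) (inv n).1 (inv n).2.1
      rw [Nat.add_succ]
      rw [h, ih, pow_succ]
      ring
  refine ⟨?_, ?_, part3⟩
  · intro t ht
    obtain ⟨n, rfl⟩ := Nat.exists_eq_add_of_le ht
    exact inv n
  · rw [← Filter.tendsto_add_atTop_iff_nat (t₀ + 1)]
    have hpow : Filter.Tendsto (fun n : ℕ => ((2 + 18 * α) / 3) ^ n *
        (x₂ (t₀ + 1) - 1 / (1 - 18 * α)) + 1 / (1 - 18 * α)) Filter.atTop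
        (nhds (1 / (1 - 18 * α))) := by
      have h0 : Filter.Tendsto (fun n : ℕ => ((2 + 18 * α) / 3) ^ n) Filter.atTop (nhds 0) :=
        tendsto_pow_atTop_nhds_zero_of_lt_one hr0 hr1
      have := (h0.mul_const (x₂ (t₀ + 1) - 1 / (1 - 18 * α))).add_const (1 / (1 - 18 * α))
      simpa using this
    refine hpow.congr fun n => ?_
    have := geo n
    rw [add_comm n (t₀ + 1)]
    linarith
end

section
/- Let μ, v > 0, w ≥ 1 and suppose C₁ := μv/2 > 1, and let Q, G > 0. Suppose B : ℕ → ℝ≥0 satisfies B(t+1) ≤ (1 − C₁/(t+w)) B(t) + G v²/(t+w)² for all t ≥ 0, with C₁/w < 1. Then there is a constant K (depending only on C₁, w, G, v) such that B(t) ≤ (w/(t+w))^{C₁} B(0) + K/(t+w−1) for all t ≥ 1; one can take K = (1/(C₁−1)) ((w+1)/w)^{C₁} ((w+1)/w)² G v². -/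
set_option maxHeartbeats 1000000 in
/-- `O(1/t)` decay for a sequence with contraction factor `1 − C₁/(t+w)`, `C₁ > 1`, and
perturbation of order `(t+w)⁻²`. -/
theorem recursive_decay (μ v w Q G : ℝ) (hμ : 0 < μ) (hv : 0 < v) (hw : 1 ≤ w)
    (hC₁ : 1 < μ * v / 2) (hQ : 0 < Q) (hG : 0 < G)
    (B : ℕ → ℝ) (hBnonneg : ∀ t, 0 ≤ B t)
    (hrec : ∀ t : ℕ, B (t + 1) ≤ (1 - (μ * v / 2) / (t + w)) * B t + G * v ^ 2 / (t + w) ^ 2)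
    (hstep : μ * v / 2 / w < 1) :
    ∀ t : ℕ, 1 ≤ t →
      B t ≤ (w / (t + w)) ^ (μ * v / 2) * B 0
        + (1 / (μ * v / 2 - 1)) * ((w + 1) / w) ^ (μ * v / 2) * ((w + 1) / w) ^ 2 * G * v ^ 2
            / (t + w - 1) := by
  set C : ℝ := μ * v / 2 with hCdef
  have hw0 : (0 : ℝ) < w := lt_of_lt_of_le one_pos hw
  have hC0 : (0 : ℝ) < C := lt_trans one_pos hC₁
  have hCw : C < w := by
    have := (div_lt_one hw0).mp hstep
    linarith
  have hC1 : (0 : ℝ) < C - 1 := by linarith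
  have hD : (0 : ℝ) < G * v ^ 2 := by positivity
  set K' : ℝ := G * v ^ 2 / (C - 1) with hK'def
  have hK'0 : 0 < K' := by positivity
  have key : ∀ s : ℕ, B s ≤ (w / (s + w)) ^ C * B 0 + K' / (s + w) := by
    intro s
    induction s with
    | zero =>
      have h1 : ((0 : ℕ) : ℝ) + w = w := by simp
      rw [h1, div_self (ne_of_gt hw0), Real.one_rpow, one_mul]
      have : 0 ≤ K' / w := by positivity
      linarith
    | succ n ih =>
      set x : ℝ := (n : ℝ) + w with hxdef
      have hx0 : (0 : ℝ) < x := by positivity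
      have hxw : w ≤ x := by
        rw [hxdef]
        have : (0 : ℝ) ≤ (n : ℝ) := Nat.cast_nonneg n
        linarith
      have hCx : C < x := lt_of_lt_of_le hCw hxw
      have hx1 : (1 : ℝ) ≤ x := le_trans hw hxw
      have h1 : (0 : ℝ) ≤ 1 - C / x := by
        have : C / x < 1 := (div_lt_one hx0).mpr hCx
        linarith
      have hcast : ((n + 1 : ℕ) : ℝ) + w = x + 1 := by push_cast; ring
      have hstep1 : B (n + 1) ≤ (1 - C / x) * ((w / x) ^ C * B 0 + K' / x) + G * v ^ 2 / x ^ 2 := by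
        calc B (n + 1) ≤ (1 - C / x) * B n + G * v ^ 2 / x ^ 2 := hrec n
          _ ≤ (1 - C / x) * ((w / x) ^ C * B 0 + K' / x) + G * v ^ 2 / x ^ 2 := by
              gcongr
      -- Bernoulli-type bound : (1 - C/x) ≤ (x/(x+1))^C
      have hbern : 1 - C / x ≤ (x / (x + 1)) ^ C := by
        have hs : (-1 : ℝ) ≤ -(1 / (x + 1)) := by
          rw [neg_le_neg_iff]
          rw [div_le_one (by linarith)]
          linarith
        have := one_add_mul_self_le_rpow_one_add hs (le_of_lt hC₁)
        have heq : (1 : ℝ) + -(1 / (x + 1)) = x / (x + 1) := by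
          field_simp
          ring
        rw [heq] at this
        have h2 : 1 - C / x ≤ 1 + C * -(1 / (x + 1)) := by
          have : C / (x + 1) ≤ C / x := by
            apply div_le_div_of_nonneg_left (le_of_lt hC0) hx0
            linarith
          have hrw : 1 + C * -(1 / (x + 1)) = 1 - C / (x + 1) := by ring
          rw [hrw]; linarith
        linarith
      have hA : (1 - C / x) * (w / x) ^ C ≤ (w / (x + 1)) ^ C := by
        have hmul : (w / (x + 1)) ^ C = (x / (x + 1)) ^ C * (w / x) ^ C := by
          rw [← Real.mul_rpow (by positivity) (by positivity)]
          congr 1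
          field_simp
        rw [hmul]
        apply mul_le_mul_of_nonneg_right hbern (Real.rpow_nonneg (by positivity) C)
      have hB : (1 - C / x) * (K' / x) + G * v ^ 2 / x ^ 2 ≤ K' / (x + 1) := by
        have hGv : G * v ^ 2 = K' * (C - 1) := by
          rw [hK'def]; field_simp
        rw [hGv]
        have heq2 : (1 - C / x) * (K' / x) + K' * (C - 1) / x ^ 2 = K' * (x - 1) / x ^ 2 := by
          field_simp
          ring
        rw [heq2, div_le_div_iff₀ (by positivity) (by positivity)]
        nlinarith [hK'0.le]
      rw [hcast]
      calc B (n + 1) ≤ (1 - C / x) * ((w / x) ^ C * B 0 + K' / x) + G * v ^ 2 / x ^ 2 := hstep1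
        _ = (1 - C / x) * (w / x) ^ C * B 0 + ((1 - C / x) * (K' / x) + G * v ^ 2 / x ^ 2) := by
            ring
        _ ≤ (w / (x + 1)) ^ C * B 0 + K' / (x + 1) := by
            gcongr
            exact hBnonneg 0
  intro t ht
  have ht1 : (1 : ℝ) ≤ (t : ℝ) := by exact_mod_cast ht
  have hden : (0 : ℝ) < (t : ℝ) + w - 1 := by linarith
  have hK'K : K' ≤ 1 / (C - 1) * ((w + 1) / w) ^ C * ((w + 1) / w) ^ 2 * G * v ^ 2 := by
    have ha : (1 : ℝ) ≤ ((w + 1) / w) ^ C := by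
      apply Real.one_le_rpow _ (le_of_lt hC0)
      rw [le_div_iff₀ hw0]; linarith
    have hb : (1 : ℝ) ≤ ((w + 1) / w) ^ 2 := by
      have : (1 : ℝ) ≤ (w + 1) / w := by rw [le_div_iff₀ hw0]; linarith
      nlinarith
    have h1 : (1 : ℝ) ≤ ((w + 1) / w) ^ C * ((w + 1) / w) ^ 2 := by nlinarith
    have hpos : (0 : ℝ) ≤ 1 / (C - 1) * G * v ^ 2 := by positivity
    calc K' = 1 / (C - 1) * G * v ^ 2 * 1 := by rw [hK'def]; ring
      _ ≤ 1 / (C - 1) * G * v ^ 2 * (((w + 1) / w) ^ C * ((w + 1) / w) ^ 2) :=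
          mul_le_mul_of_nonneg_left h1 hpos
      _ = 1 / (C - 1) * ((w + 1) / w) ^ C * ((w + 1) / w) ^ 2 * G * v ^ 2 := by ring
  calc B t ≤ (w / (t + w)) ^ C * B 0 + K' / (t + w) := key t
    _ ≤ (w / (t + w)) ^ C * B 0
        + 1 / (C - 1) * ((w + 1) / w) ^ C * ((w + 1) / w) ^ 2 * G * v ^ 2 / (t + w - 1) := by
        have hfin : K' / ((t : ℝ) + w)
            ≤ 1 / (C - 1) * ((w + 1) / w) ^ C * ((w + 1) / w) ^ 2 * G * v ^ 2 / ((t : ℝ) + w - 1) :=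
          calc K' / ((t : ℝ) + w) ≤ K' / ((t : ℝ) + w - 1) := by
                apply div_le_div_of_nonneg_left (le_of_lt hK'0) hden
                linarith
            _ ≤ 1 / (C - 1) * ((w + 1) / w) ^ C * ((w + 1) / w) ^ 2 * G * v ^ 2 / ((t : ℝ) + w - 1) := by
                gcongr
        exact add_le_add_right hfin _
end
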